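/- Let ξ, κ, s, Q₁, Q₂ be real numbers with s > 2, κ > 0, Q₂ > Q₁ ≥ 1. Then the number of rational numbers p/q with |ξ − p/q| ≤ κ/q^s and Q₁ ≤ q ≤ Q₂ is at most 2^{s+1}κ/((2^{s−2}−1)·Q₁^{s−2}) + ⌈log(Q₂/Q₁)/log 2⌉. -/

import Mathlib

open Real Set

lemma rat_sep (r r' : ℚ) (h : r ≠ r') :
    1 / ((r.den : ℝ) * r'.den) ≤ |(r : ℝ) - r'| := by
  have hd : (0:ℝ) < r.den := by exact_mod_cast r.pos
  have hd' : (0:ℝ) < r'.den := by exact_mod_cast r'.pos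
  have hcast : (r : ℝ) - r' = ((r.num * r'.den - r'.num * r.den : ℤ) : ℝ) / (r.den * r'.den) := by
    rw [Rat.cast_def, Rat.cast_def]
    push_cast
    field_simp
  have hne : (r.num * r'.den - r'.num * r.den : ℤ) ≠ 0 := by
    intro hc
    apply h
    have h0 : (r.num : ℚ) * r'.den = r'.num * r.den := by
      have := sub_eq_zero.mp hc
      exact_mod_cast this
    have h1 : (r.num : ℚ) / r.den = (r'.num : ℚ) / r'.den := by
      rw [div_eq_div_iff (Nat.cast_ne_zero.mpr r.pos.ne' : (r.den:ℚ) ≠ 0)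
        (Nat.cast_ne_zero.mpr r'.pos.ne' : (r'.den:ℚ) ≠ 0)]
      exact h0
    rw [← Rat.num_div_den r, ← Rat.num_div_den r', h1]
  have h1 : (1:ℝ) ≤ |((r.num * r'.den - r'.num * r.den : ℤ) : ℝ)| := by
    rw [← Int.cast_abs]
    exact_mod_cast Int.one_le_abs hne
  rw [hcast, abs_div, abs_of_pos (mul_pos hd hd')]
  gcongr

lemma block_bound (ξ κ s : ℝ) (hs : 2 < s) (hκ : 0 < κ) (Q : ℝ) (hQ : 1 ≤ Q) :
    {r : ℚ | |ξ - (r:ℝ)| ≤ κ / (r.den:ℝ) ^ s ∧ Q ≤ (r.den:ℝ) ∧ (r.den:ℝ) ≤ 2*Q}.Finite ∧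
    (({r : ℚ | |ξ - (r:ℝ)| ≤ κ / (r.den:ℝ) ^ s ∧ Q ≤ (r.den:ℝ) ∧ (r.den:ℝ) ≤ 2*Q}.ncard : ℝ))
      ≤ 8 * κ / Q ^ (s-2) + 1 := by
  have hQ0 : (0:ℝ) < Q := lt_of_lt_of_le one_pos hQ
  set S := {r : ℚ | |ξ - (r:ℝ)| ≤ κ / (r.den:ℝ) ^ s ∧ Q ≤ (r.den:ℝ) ∧ (r.den:ℝ) ≤ 2*Q} with hS
  have hs0 : (0:ℝ) ≤ s := by linarith
  -- members lie in an interval of length 2κ/Q^s around ξ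
  have hmem : ∀ r ∈ S, ξ - κ / Q ^ s ≤ (r:ℝ) ∧ (r:ℝ) ≤ ξ + κ / Q ^ s := by
    intro r hr
    obtain ⟨h1, h2, _⟩ := hr
    have hden : Q ^ s ≤ (r.den:ℝ) ^ s := Real.rpow_le_rpow hQ0.le h2 hs0
    have hb : κ / (r.den:ℝ) ^ s ≤ κ / Q ^ s := by
      apply div_le_div_of_nonneg_left hκ.le (Real.rpow_pos_of_pos hQ0 s) hden
    have := abs_sub_le_iff.mp h1
    constructor <;> linarith [this.1, this.2]
  -- separation
  have hsep : ∀ r ∈ S, ∀ r' ∈ S, r ≠ r' → 1 / (4 * Q^2) ≤ |(r:ℝ) - r'| := by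
    intro r hr r' hr' hne
    have h1 := rat_sep r r' hne
    have hr2 := hr.2.2
    have hr'2 := hr'.2.2
    have hrp : (0:ℝ) < r.den := by exact_mod_cast r.pos
    have hr'p : (0:ℝ) < r'.den := by exact_mod_cast r'.pos
    have : (r.den : ℝ) * r'.den ≤ 4 * Q^2 := by nlinarith
    calc 1 / (4 * Q^2) ≤ 1 / ((r.den : ℝ) * r'.den) := by
          apply one_div_le_one_div_of_le (by positivity) this
      _ ≤ _ := h1
  have hM : (0:ℝ) < 4 * Q^2 := by positivity
  -- injectivity of floor maps
  have hinj : ∀ c : ℝ, InjOn (fun r : ℚ => ⌊((r:ℝ) - c) * (4*Q^2)⌋) S := by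
    intro c r hr r' hr' hfe
    by_contra hne
    have h1 := hsep r hr r' hr' hne
    have h2 : |((r:ℝ) - c) * (4*Q^2) - ((r':ℝ) - c) * (4*Q^2)| < 1 :=
      Int.abs_sub_lt_one_of_floor_eq_floor hfe
    have h3 : |(r:ℝ) - r'| * (4*Q^2) < 1 := by
      rw [← abs_of_pos hM, ← abs_mul]
      convert h2 using 1
      ring_nf
    have h4 : (1:ℝ) ≤ |(r:ℝ) - r'| * (4*Q^2) := (div_le_iff₀ hM).mp h1
    linarith
  -- finiteness
  have hfin : S.Finite := by
    have himage : (fun r : ℚ => ⌊((r:ℝ) - 0) * (4*Q^2)⌋) '' S ⊆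
        Set.Icc ⌊(ξ - κ / Q ^ s - 0) * (4*Q^2)⌋ ⌊(ξ + κ / Q ^ s) * (4*Q^2)⌋ := by
      rintro _ ⟨r, hr, rfl⟩
      obtain ⟨ha, hb⟩ := hmem r hr
      constructor
      · exact Int.floor_le_floor (by nlinarith)
      · exact Int.floor_le_floor (by nlinarith)
    exact Set.Finite.of_finite_image ((Set.finite_Icc _ _).subset himage) (hinj 0)
  refine ⟨hfin, ?_⟩
  -- key length computation
  have hlen : (2 * κ / Q ^ s) * (4 * Q ^ 2) = 8 * κ / Q ^ (s - 2) := by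
    have h2 : Q ^ s = Q ^ (s-2) * Q ^ (2:ℕ) := by
      rw [← Real.rpow_natCast Q 2, ← Real.rpow_add hQ0]
      norm_num
    rw [h2]
    have := (Real.rpow_pos_of_pos hQ0 (s-2)).ne'
    field_simp
    ring
  rcases Set.eq_empty_or_nonempty S with he | hne
  · rw [he]
    simp only [Set.ncard_empty, Nat.cast_zero]
    positivity
  -- minimal element
  obtain ⟨r₀, hr₀S, hr₀min⟩ := Set.exists_min_image S (fun r : ℚ => (r:ℝ)) hfin hne
  set g : ℚ → ℤ := fun r => ⌊((r:ℝ) - (r₀:ℝ)) * (4*Q^2)⌋ with hg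
  have himg : g '' S ⊆ Set.Icc 0 ⌊(2 * κ / Q ^ s) * (4*Q^2)⌋ := by
    rintro _ ⟨r, hr, rfl⟩
    obtain ⟨ha, hb⟩ := hmem r hr
    obtain ⟨ha₀, hb₀⟩ := hmem r₀ hr₀S
    constructor
    · apply Int.floor_nonneg.mpr
      have h5 := hr₀min r hr
      have : (0:ℝ) ≤ (r:ℝ) - r₀ := by linarith
      positivity
    · apply Int.floor_le_floor
      have h5 := hr₀min r hr
      have h7 : (r:ℝ) - r₀ ≤ 2 * κ / Q ^ s := by
        have he : 2 * κ / Q ^ s = κ / Q ^ s + κ / Q ^ s := by ring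
        rw [he]; linarith
      exact mul_le_mul_of_nonneg_right h7 hM.le
  have hcard : S.ncard ≤ (Set.Icc (0:ℤ) ⌊(2 * κ / Q ^ s) * (4*Q^2)⌋).ncard := by
    rw [← Set.ncard_image_of_injOn (s := S) (hinj ((r₀:ℝ)))]
    exact Set.ncard_le_ncard himg (Set.finite_Icc _ _)
  have hL0 : (0:ℝ) ≤ (2 * κ / Q ^ s) * (4*Q^2) := by positivity
  have hIcc : ((Set.Icc (0:ℤ) ⌊(2 * κ / Q ^ s) * (4*Q^2)⌋).ncard : ℝ)
      ≤ (2 * κ / Q ^ s) * (4*Q^2) + 1 := by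
    rw [← Finset.coe_Icc, Set.ncard_coe_finset, Int.card_Icc]
    have hfl : (0:ℤ) ≤ ⌊(2 * κ / Q ^ s) * (4*Q^2)⌋ := Int.floor_nonneg.mpr hL0
    have h6 : ((⌊(2 * κ / Q ^ s) * (4*Q^2)⌋ + 1 - 0).toNat : ℝ)
        = ((⌊(2 * κ / Q ^ s) * (4*Q^2)⌋ : ℝ) + 1) := by
      rw [← Int.cast_natCast, Int.toNat_of_nonneg (by omega)]
      push_cast; ring
    rw [h6]
    linarith [Int.floor_le ((2 * κ / Q ^ s) * (4*Q^2))]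
  calc (S.ncard : ℝ) ≤ _ := by exact_mod_cast hcard
    _ ≤ (2 * κ / Q ^ s) * (4*Q^2) + 1 := hIcc
    _ = 8 * κ / Q ^ (s - 2) + 1 := by rw [hlen]

lemma ncard_range_biUnion_le (T : ℕ → Set ℚ) (n : ℕ) :
    (⋃ j ∈ Finset.range n, T j).ncard ≤ ∑ j ∈ Finset.range n, (T j).ncard := by
  induction n with
  | zero => simp
  | succ n ih =>
    rw [Finset.range_add_one, Finset.sum_insert Finset.notMem_range_self,
      Finset.set_biUnion_insert]
    exact (Set.ncard_union_le _ _).trans (add_le_add_right ih _)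

/-- Counting good rational approximations with denominator in [Q₁, Q₂]:
the number of rationals p/q with |ξ − p/q| ≤ κ/q^s and Q₁ ≤ q ≤ Q₂ is at most
2^{s+1}κ/((2^{s−2}−1)·Q₁^{s−2}) + ⌈log(Q₂/Q₁)/log 2⌉. -/
theorem stmt_4 (ξ κ s Q₁ Q₂ : ℝ) (hs : 2 < s) (hκ : 0 < κ)
    (hQ₁ : 1 ≤ Q₁) (hQ₁₂ : Q₁ < Q₂) :
    {r : ℚ | |ξ - (r : ℝ)| ≤ κ / (r.den : ℝ) ^ s ∧ Q₁ ≤ (r.den : ℝ) ∧ (r.den : ℝ) ≤ Q₂}.Finite ∧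
    (Nat.card {r : ℚ | |ξ - (r : ℝ)| ≤ κ / (r.den : ℝ) ^ s ∧
        Q₁ ≤ (r.den : ℝ) ∧ (r.den : ℝ) ≤ Q₂} : ℝ) ≤
      2 ^ (s + 1) * κ / ((2 ^ (s - 2) - 1) * Q₁ ^ (s - 2)) +
        (⌈Real.log (Q₂ / Q₁) / Real.log 2⌉ : ℝ) := by
  classical
  have hQ0 : (0:ℝ) < Q₁ := lt_of_lt_of_le one_pos hQ₁
  set S := {r : ℚ | |ξ - (r : ℝ)| ≤ κ / (r.den : ℝ) ^ s ∧ Q₁ ≤ (r.den : ℝ) ∧ (r.den : ℝ) ≤ Q₂}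
    with hSdef
  set n : ℕ := (⌈Real.log (Q₂ / Q₁) / Real.log 2⌉).toNat with hn
  have hlogpos : 0 < Real.log (Q₂ / Q₁) := Real.log_pos (by rw [lt_div_iff₀ hQ0]; linarith)
  have hlog2 : 0 < Real.log 2 := Real.log_pos one_lt_two
  have hceil_pos : 0 < ⌈Real.log (Q₂ / Q₁) / Real.log 2⌉ := Int.ceil_pos.mpr (div_pos hlogpos hlog2)
  have hncast : ((n:ℤ)) = ⌈Real.log (Q₂ / Q₁) / Real.log 2⌉ := Int.toNat_of_nonneg hceil_pos.le
  have hn1 : 1 ≤ n := by omega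
  have hnR : (n:ℝ) = (⌈Real.log (Q₂ / Q₁) / Real.log 2⌉ : ℝ) := by exact_mod_cast hncast
  have hcov : Q₂ ≤ Q₁ * 2 ^ n := by
    have h1 : Real.log (Q₂ / Q₁) / Real.log 2 ≤ (n:ℝ) := hnR ▸ Int.le_ceil _
    have h2 : Real.log (Q₂ / Q₁) ≤ (n:ℝ) * Real.log 2 := by
      rwa [div_le_iff₀ hlog2] at h1
    have h3 : Real.log (Q₂/Q₁) ≤ Real.log ((2:ℝ)^n) := by rw [Real.log_pow]; exact_mod_cast h2
    have h4 : Q₂ / Q₁ ≤ 2 ^ n := by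
      have h5 := Real.exp_le_exp.mpr h3
      rwa [Real.exp_log (div_pos (by linarith) hQ0), Real.exp_log (by positivity)] at h5
    rw [div_le_iff₀ hQ0] at h4; linarith [h4]
  set T : ℕ → Set ℚ := fun j => {r : ℚ | |ξ - (r:ℝ)| ≤ κ / (r.den:ℝ) ^ s ∧
    Q₁ * 2^j ≤ (r.den:ℝ) ∧ (r.den:ℝ) ≤ 2*(Q₁ * 2^j)} with hT
  have hQj : ∀ j : ℕ, 1 ≤ Q₁ * 2 ^ j := by
    intro j
    have h1 : (1:ℝ) ≤ 2 ^ j := one_le_pow₀ (by norm_num : (1:ℝ) ≤ 2)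
    nlinarith
  have hblock := fun j => block_bound ξ κ s hs hκ (Q₁ * 2^j) (hQj j)
  -- covering
  have hsub : S ⊆ ⋃ j ∈ Finset.range n, T j := by
    intro r hr
    obtain ⟨h1, h2, h3⟩ := hr
    obtain ⟨m, hm⟩ : ∃ m, n = m + 1 := ⟨n - 1, by omega⟩
    set P : ℕ → Prop := fun j => Q₁ * 2^j ≤ (r.den:ℝ) with hP
    have hP0 : P 0 := by simp only [hP, pow_zero, mul_one]; exact h2
    set j := Nat.findGreatest P m with hj
    have hPj : P j := Nat.findGreatest_spec (Nat.zero_le _) hP0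
    have hjle : j ≤ m := Nat.findGreatest_le _
    have hupper : (r.den:ℝ) ≤ 2*(Q₁ * 2^j) := by
      rcases lt_or_ge j m with hlt | hge
      · have hnotP : ¬ P (j+1) := Nat.findGreatest_is_greatest (Nat.lt_succ_self j) (by omega)
        have h7 : (r.den:ℝ) < Q₁ * 2^(j+1) := by
          simpa [hP] using not_le.mp hnotP
        calc (r.den:ℝ) ≤ Q₁ * 2^(j+1) := h7.le
          _ = 2*(Q₁ * 2^j) := by ring
      · have hjeq : j = m := le_antisymm hjle hge
        have h8 : Q₁ * 2 ^ n = 2 * (Q₁ * 2 ^ j) := by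
          rw [hjeq, hm, pow_succ]; ring
        linarith [hcov, h3]
    refine Set.mem_biUnion (Finset.mem_range.mpr (by omega) : j ∈ Finset.range n) ?_
    exact ⟨h1, hPj, hupper⟩
  have hUfin : (⋃ j ∈ Finset.range n, T j).Finite :=
    Set.Finite.biUnion (Finset.range n).finite_toSet (fun j _ => (hblock j).1)
  have hSfin : S.Finite := hUfin.subset hsub
  refine ⟨hSfin, ?_⟩
  rw [Nat.card_coe_set_eq]
  -- geometric quantities
  set a : ℝ := 2 ^ (s-2) with ha
  have ha1 : 1 < a := by
    rw [ha, show (1:ℝ) = 2 ^ (0:ℝ) by simp]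
    exact Real.rpow_lt_rpow_of_exponent_lt one_lt_two (by linarith)
  have ha0 : 0 < a := lt_trans one_pos ha1
  have hx0 : (0:ℝ) ≤ a⁻¹ := by positivity
  have hx1 : a⁻¹ < 1 := inv_lt_one_of_one_lt₀ ha1
  -- per-block bound
  have hterm : ∀ j : ℕ, ((T j).ncard : ℝ) ≤ (8 * κ / Q₁ ^ (s-2)) * (a⁻¹)^j + 1 := by
    intro j
    have h1 := (hblock j).2
    have h2 : (Q₁ * 2^j) ^ (s-2) = Q₁ ^ (s-2) * a ^ j := by
      rw [Real.mul_rpow hQ0.le (by positivity)]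
      congr 1
      rw [← Real.rpow_natCast (2:ℝ) j, ← Real.rpow_mul (by norm_num), mul_comm ((j:ℝ)),
        Real.rpow_mul (by norm_num), Real.rpow_natCast]
    rw [h2] at h1
    have h3 : 8 * κ / (Q₁ ^ (s-2) * a ^ j) = (8 * κ / Q₁ ^ (s-2)) * (a⁻¹)^j := by
      rw [inv_pow]
      field_simp
    rw [h3] at h1
    exact h1
  have hQs0 : (0:ℝ) < Q₁ ^ (s-2) := Real.rpow_pos_of_pos hQ0 _
  -- sum bound
  have hsum : (S.ncard : ℝ) ≤ (8 * κ / Q₁ ^ (s-2)) * (1 - a⁻¹)⁻¹ + n := by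
    have h1 : S.ncard ≤ ∑ j ∈ Finset.range n, (T j).ncard :=
      le_trans (Set.ncard_le_ncard hsub hUfin) (ncard_range_biUnion_le T n)
    have h2 : (S.ncard : ℝ) ≤ ∑ j ∈ Finset.range n, ((T j).ncard : ℝ) := by
      exact_mod_cast h1
    have h3 : ∑ j ∈ Finset.range n, ((T j).ncard : ℝ)
        ≤ ∑ j ∈ Finset.range n, ((8 * κ / Q₁ ^ (s-2)) * (a⁻¹)^j + 1) :=
      Finset.sum_le_sum (fun j _ => hterm j)
    have h4 : ∑ j ∈ Finset.range n, ((8 * κ / Q₁ ^ (s-2)) * (a⁻¹)^j + 1)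
        = (8 * κ / Q₁ ^ (s-2)) * (∑ j ∈ Finset.range n, (a⁻¹)^j) + n := by
      rw [Finset.sum_add_distrib, ← Finset.mul_sum]
      simp
    have h5 : ∑ j ∈ Finset.range n, (a⁻¹)^j ≤ (1 - a⁻¹)⁻¹ := by
      rw [← tsum_geometric_of_lt_one hx0 hx1]
      exact (summable_geometric_of_lt_one hx0 hx1).sum_le_tsum _
        (fun i _ => pow_nonneg hx0 i)
    have h6 : (8 * κ / Q₁ ^ (s-2)) * (∑ j ∈ Finset.range n, (a⁻¹)^j)
        ≤ (8 * κ / Q₁ ^ (s-2)) * (1 - a⁻¹)⁻¹ :=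
      mul_le_mul_of_nonneg_left h5 (by positivity)
    linarith
  -- final algebra
  have hfinal : (8 * κ / Q₁ ^ (s-2)) * (1 - a⁻¹)⁻¹
      = 2 ^ (s + 1) * κ / ((a - 1) * Q₁ ^ (s - 2)) := by
    have h8 : (2:ℝ) ^ (s+1) = a * 8 := by
      have h83 : (2:ℝ) ^ ((3:ℕ):ℝ) = 8 := by rw [Real.rpow_natCast]; norm_num
      rw [ha, show s + 1 = (s-2) + 3 by ring, Real.rpow_add two_pos,
        show ((3:ℝ)) = ((3:ℕ):ℝ) by norm_num, h83]
    rw [h8]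
    have h9 : (1 - a⁻¹) = (a - 1)/a := by field_simp
    rw [h9]
    have ham1 : a - 1 ≠ 0 := by linarith
    field_simp
  rw [← hnR]
  calc (S.ncard : ℝ) ≤ (8 * κ / Q₁ ^ (s-2)) * (1 - a⁻¹)⁻¹ + n := hsum
    _ = 2 ^ (s + 1) * κ / ((a - 1) * Q₁ ^ (s - 2)) + n := by rw [hfinal]
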